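/- (First-stage identity in the LATE identification.) In the IV setup, for every u ∈ 𝒰 such that P(T = 1, U = u) > 0 and P(T = 0, U = u) > 0: E[T̃ ∣ T = 1, U = u] − E[T̃ ∣ T = 0, U = u] = P(T̃_{1,u} = 1, T̃_{0,u} = 0), i.e. the first-stage difference equals the probability of being a complier at u. -/

import Mathlib

open MeasureTheory ProbabilityTheory

/-- Conditional expectation `E[Z ∣ B] = E[Z·1_B] / P(B)`. -/
noncomputable def cexp {Ω : Type*} [MeasurableSpace Ω] (μ : Measure Ω) (Z : Ω → ℝ)
    (B : Set Ω) : ℝ :=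
  (∫ ω in B, Z ω ∂μ) / (μ B).toReal

/-- First-stage identity in the LATE identification: in the IV setup, for every `u`
with `P(T = 1, U = u) > 0` and `P(T = 0, U = u) > 0`,
`E[T̃ ∣ T = 1, U = u] − E[T̃ ∣ T = 0, U = u] = P(T̃_{1,u} = 1, T̃_{0,u} = 0)`. -/
theorem first_stage_identity
    {Ω 𝒰 : Type*} [MeasurableSpace Ω] (μ : Measure Ω) [IsProbabilityMeasure μ]
    [Countable 𝒰] [MeasurableSpace 𝒰] [MeasurableSingletonClass 𝒰]
    (T : Ω → Bool) (U : Ω → 𝒰)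
    (Ttil : Bool → 𝒰 → Ω → Bool) (Ypo : Bool → 𝒰 → Ω → ℝ)
    (Tperc : Ω → Bool) (Y : Ω → ℝ)
    (hT : Measurable T) (hU : Measurable U)
    (hTtil : ∀ (t : Bool) (u : 𝒰), Measurable (Ttil t u))
    (hYpo : ∀ (t : Bool) (u : 𝒰), Measurable (Ypo t u))
    (hbdd : ∃ C : ℝ, ∀ (t : Bool) (u : 𝒰) (ω : Ω), |Ypo t u ω| ≤ C)
    (hTperc : ∀ ω, Tperc ω = Ttil (T ω) (U ω) ω)
    (hYobs : ∀ ω, Y ω = Ypo (Tperc ω) (U ω) ω)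
    (hunconf : ∀ u : 𝒰,
      IndepFun (fun ω => (Ypo false u ω, Ypo true u ω, Ttil false u ω, Ttil true u ω))
        (fun ω => (T ω, U ω)) μ)
    (hmono : ∀ (u : 𝒰) (ω : Ω), Ttil false u ω ≤ Ttil true u ω) :
    ∀ u : 𝒰, 0 < μ ({ω | T ω = true} ∩ {ω | U ω = u}) →
      0 < μ ({ω | T ω = false} ∩ {ω | U ω = u}) →
      cexp μ (fun ω => if Tperc ω = true then (1 : ℝ) else 0)
          ({ω | T ω = true} ∩ {ω | U ω = u})
        - cexp μ (fun ω => if Tperc ω = true then (1 : ℝ) else 0)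
            ({ω | T ω = false} ∩ {ω | U ω = u})
        = (μ {ω | Ttil true u ω = true ∧ Ttil false u ω = false}).toReal := by
  intro u h1 h0
  have key : ∀ t : Bool, 0 < μ ({ω | T ω = t} ∩ {ω | U ω = u}) →
      cexp μ (fun ω => if Tperc ω = true then (1 : ℝ) else 0)
        ({ω | T ω = t} ∩ {ω | U ω = u}) = (μ {ω | Ttil t u ω = true}).toReal := by
    intro t hpos
    set B : Set Ω := {ω | T ω = t} ∩ {ω | U ω = u} with hBdef
    set A : Set Ω := {ω | Ttil t u ω = true} with hAdef
    have hBmeas : MeasurableSet B :=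
      (hT (measurableSet_singleton t)).inter (hU (measurableSet_singleton u))
    have hAmeas : MeasurableSet A := hTtil t u (measurableSet_singleton true)
    -- independence of Ttil t u and (T, U)
    have hind : IndepFun (Ttil t u) (fun ω => (T ω, U ω)) μ := by
      have h := (hunconf u).comp
        (φ := fun p : ℝ × ℝ × Bool × Bool => if t then p.2.2.2 else p.2.2.1)
        (ψ := id)
        (by cases t <;> simp <;> fun_prop) measurable_id
      cases t <;> simpa [Function.comp_def] using h
    have hBpre : (fun ω => (T ω, U ω)) ⁻¹' ({t} ×ˢ {u}) = B := by
      ext ω; simp [hBdef, Set.mem_prod, and_comm]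
    have hmul : μ (A ∩ B) = μ A * μ B := by
      have := hind.measure_inter_preimage_eq_mul {true} ({t} ×ˢ {u})
        (measurableSet_singleton true)
        ((measurableSet_singleton t).prod (measurableSet_singleton u))
      rw [hBpre] at this
      simpa [hBpre, hAdef, Set.preimage, Set.mem_singleton_iff] using this
    have hint : (∫ ω in B, (if Tperc ω = true then (1 : ℝ) else 0) ∂μ)
        = (μ (A ∩ B)).toReal := by
      have hcongr : ∀ ω ∈ B, (if Tperc ω = true then (1 : ℝ) else 0)
          = A.indicator (fun _ => (1 : ℝ)) ω := by
        intro ω hω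
        have ht : T ω = t := hω.1
        have hu' : U ω = u := hω.2
        have : Tperc ω = Ttil t u ω := by rw [hTperc ω, ht, hu']
        by_cases h : Ttil t u ω = true
        · simp [this, h, Set.indicator, hAdef]
        · simp [this, h, Set.indicator, hAdef]
      rw [setIntegral_congr_fun hBmeas hcongr, setIntegral_indicator hAmeas]
      simp [Set.inter_comm, measureReal_def]
    have hBne : (μ B).toReal ≠ 0 := by
      have h1' : μ B ≠ 0 := hpos.ne'
      have h2' : μ B ≠ ⊤ := measure_ne_top μ B
      simp [ENNReal.toReal_eq_zero_iff, h1', h2']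
    rw [cexp, hint, hmul, ENNReal.toReal_mul, mul_div_assoc,
      div_self hBne, mul_one]
  rw [key true h1, key false h0]
  have hsub : {ω | Ttil false u ω = true} ⊆ {ω | Ttil true u ω = true} := by
    intro ω h
    have := hmono u ω
    simp only [Set.mem_setOf_eq] at h ⊢
    rw [h] at this
    exact Bool.eq_true_of_true_le this
  have hdiff : {ω | Ttil true u ω = true} \ {ω | Ttil false u ω = true}
      = {ω | Ttil true u ω = true ∧ Ttil false u ω = false} := by
    ext ω
    simp [Set.mem_diff, Bool.not_eq_true]
  rw [← hdiff, measure_diff hsub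
    ((hTtil false u (measurableSet_singleton true)).nullMeasurableSet)
    (measure_ne_top μ _),
    ENNReal.toReal_sub_of_le (measure_mono hsub) (measure_ne_top μ _)]
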